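/- Package Formula Reduction Soundness: let (R_Ψ, Δ_Ψ, r_Ψ) be a Package Formula Calculus instance, and let (R, Δ, r) be its core reduction via the encoding function 𝓔: base case 𝓔(p Δ_Ψ (n, vs)) = {p Δ (n, vs)}; conjunction splits into both conjuncts; disjunction ψ_L ∨ ψ_R introduces a fresh two-version package ⟨ψ_L ∨ ψ_R⟩ with p depending on versions {0, 1}, version 0 encoding ψ_L and version 1 encoding ψ_R; negation is pushed inwards by De Morgan's laws and double-negation elimination; negated atoms ¬(n, vs) are encoded as a conflict: p Δ (⟨n, vs⟩, {1}) together with (n, u) Δ (⟨n, vs⟩, {0}) for each u ∈ vs. If S ∈ 𝒮(Δ, r), then S_Ψ = S ∩ R_Ψ is a valid package formula resolution in 𝒮_Ψ(Δ_Ψ, r_Ψ). -/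

import Mathlib

/-- Core calculus validity: root inclusion, dependency closure, version uniqueness. -/
def ValidRes {A B : Type*} (R : Set (A × B)) (Δ : Set ((A × B) × A × Set B))
    (r : A × B) (S : Set (A × B)) : Prop :=
  S ⊆ R ∧ r ∈ S ∧
    (∀ p ∈ S, ∀ (n : A) (vs : Set B), (p, n, vs) ∈ Δ → ∃ v ∈ vs, (n, v) ∈ S) ∧
    ∀ (n : A) (v v' : B), (n, v) ∈ S → (n, v') ∈ S → v = v'

/-- Package formulae: `ψ ::= (n, vs) | ψ ∧ ψ | ψ ∨ ψ | ¬ψ`. -/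
inductive PFormula (N V : Type*) : Type _
  | atom : N → Set V → PFormula N V
  | and : PFormula N V → PFormula N V → PFormula N V
  | or : PFormula N V → PFormula N V → PFormula N V
  | not : PFormula N V → PFormula N V

/-- Satisfaction `S ⊨ ψ` of a package formula by a set of packages. -/
def PSat {N V : Type*} (S : Set (N × V)) : PFormula N V → Prop
  | .atom n vs => ∃ v ∈ vs, (n, v) ∈ S
  | .and ψL ψR => PSat S ψL ∧ PSat S ψR
  | .or ψL ψR => PSat S ψL ∨ PSat S ψR
  | .not ψ => ¬ PSat S ψ

/-- Validity in the Package Formula Calculus: root inclusion, formula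
closure, and version uniqueness. -/
def PFValid {N V : Type*} (RΨ : Set (N × V))
    (ΔΨ : Set ((N × V) × PFormula N V)) (rΨ : N × V) (SΨ : Set (N × V)) : Prop :=
  SΨ ⊆ RΨ ∧ rΨ ∈ SΨ ∧
    (∀ p ∈ SΨ, ∀ ψ : PFormula N V, (p, ψ) ∈ ΔΨ → PSat SΨ ψ) ∧
    ∀ (n : N) (v v' : V), (n, v) ∈ SΨ → (n, v') ∈ SΨ → v = v'

/-- Names of the reduced instance: original names, fresh disjunction names
`⟨ψ_L ∨ ψ_R⟩`, and fresh negated-atom (conflict) names `⟨n, vs⟩`. -/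
abbrev PFName (N V : Type*) := N ⊕ ((PFormula N V × PFormula N V) ⊕ (N × Set V))

/-- Versions of the reduced instance: original versions plus `0`/`1` for the
synthetic two-version packages (`false` is `0`, `true` is `1`). -/
abbrev PFVer (V : Type*) := V ⊕ Bool

/-- The synthetic disjunction name `⟨ψ_L ∨ ψ_R⟩`. -/
def orName {N V : Type*} (ψL ψR : PFormula N V) : PFName N V :=
  Sum.inr (Sum.inl (ψL, ψR))

/-- The synthetic negated-atom name `⟨n, vs⟩`. -/
def negAtomName {N V : Type*} (n : N) (vs : Set V) : PFName N V :=
  Sum.inr (Sum.inr (n, vs))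

/-- The encoding function `𝓔` of the package formula reduction, in signed
form: `encE p true ψ` encodes `p Δ_Ψ ψ` and `encE p false ψ` encodes
`p Δ_Ψ ¬ψ` (pushing negations inwards by De Morgan's laws and
double-negation elimination). Disjunction introduces a fresh two-version
package, version `0` encoding the left disjunct and `1` the right; negated
atoms are encoded as conflicts via a fresh two-version package. -/
def encE {N V : Type*} :
    PFName N V × PFVer V → Bool → PFormula N V →
      Set ((PFName N V × PFVer V) × PFName N V × Set (PFVer V))
  | p, true, .atom n vs => {(p, Sum.inl n, Sum.inl '' vs)}
  | p, true, .and ψL ψR => encE p true ψL ∪ encE p true ψR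
  | p, true, .or ψL ψR =>
      {(p, orName ψL ψR, {Sum.inr false, Sum.inr true})} ∪
        encE (orName ψL ψR, Sum.inr false) true ψL ∪
        encE (orName ψL ψR, Sum.inr true) true ψR
  | p, true, .not ψ => encE p false ψ
  | p, false, .atom n vs =>
      {(p, negAtomName n vs, {Sum.inr true})} ∪
        {d | ∃ u ∈ vs, d = ((Sum.inl n, Sum.inl u), negAtomName n vs,
          ({Sum.inr false} : Set (PFVer V)))}
  | p, false, .and ψL ψR =>
      {(p, orName (.not ψL) (.not ψR), {Sum.inr false, Sum.inr true})} ∪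
        encE (orName (.not ψL) (.not ψR), Sum.inr false) false ψL ∪
        encE (orName (.not ψL) (.not ψR), Sum.inr true) false ψR
  | p, false, .or ψL ψR => encE p false ψL ∪ encE p false ψR
  | p, false, .not ψ => encE p true ψ
  termination_by _ _ ψ => sizeOf ψ
  decreasing_by all_goals simp_wf <;> omega

/-- Embedding of original packages into the reduced instance. -/
def embΨ {N V : Type*} (p : N × V) : PFName N V × PFVer V :=
  (Sum.inl p.1, Sum.inl p.2)

/-- Reduced repository: the original packages together with the synthetic
two-version packages. -/
def RΨred {N V : Type*} (RΨ : Set (N × V)) : Set (PFName N V × PFVer V) :=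
  (embΨ '' RΨ) ∪
    {q | ∃ (x : (PFormula N V × PFormula N V) ⊕ (N × Set V)) (b : Bool),
      q = (Sum.inr x, Sum.inr b)}

/-- Reduced dependencies: the union of the encodings of all package formula
dependencies. -/
def ΔΨred {N V : Type*} (ΔΨ : Set ((N × V) × PFormula N V)) :
    Set ((PFName N V × PFVer V) × PFName N V × Set (PFVer V)) :=
  {d | ∃ (p : N × V) (ψ : PFormula N V), (p, ψ) ∈ ΔΨ ∧ d ∈ encE (embΨ p) true ψ}

/-- **Package Formula Reduction Soundness**: if `S` is a valid core
resolution of the reduced instance then `S_Ψ = S ∩ R_Ψ` is a valid package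
formula resolution. -/
theorem packageFormulaReduction_sound {N V : Type*} (RΨ : Set (N × V))
    (ΔΨ : Set ((N × V) × PFormula N V)) (rΨ : N × V)
    (S : Set (PFName N V × PFVer V))
    (hS : ValidRes (RΨred RΨ) (ΔΨred ΔΨ) (embΨ rΨ) S) :
    PFValid RΨ ΔΨ rΨ {p : N × V | embΨ p ∈ S} := by
  obtain ⟨hsub, hroot, hclo, huniq⟩ := hS
  set SΨ : Set (N × V) := {p : N × V | embΨ p ∈ S} with hSΨ
  have main : ∀ (ψ : PFormula N V) (b : Bool) (q : PFName N V × PFVer V),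
      q ∈ S → encE q b ψ ⊆ ΔΨred ΔΨ →
      (if b then PSat SΨ ψ else ¬ PSat SΨ ψ) := by
    intro ψ
    induction ψ with
    | atom n vs =>
      intro b q hq hss
      cases b with
      | true =>
        have hd : (q, Sum.inl n, Sum.inl '' vs) ∈ ΔΨred ΔΨ := by
          apply hss; simp [encE]
        obtain ⟨v, hv, hvS⟩ := hclo q hq _ _ hd
        obtain ⟨u, hu, rfl⟩ := hv
        exact ⟨u, hu, hvS⟩
      | false =>
        rw [show encE q false (.atom n vs) =
            {(q, negAtomName n vs, ({Sum.inr true} : Set (PFVer V)))} ∪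
              {d | ∃ u ∈ vs, d = ((Sum.inl n, Sum.inl u), negAtomName n vs,
                ({Sum.inr false} : Set (PFVer V)))} from by simp [encE]] at hss
        simp only [if_false, PSat]
        rintro ⟨u, hu, huS⟩
        have hd1 : (q, negAtomName n vs, ({Sum.inr true} : Set (PFVer V))) ∈ ΔΨred ΔΨ := by
          apply hss; simp [encE]
        have hd2 : ((embΨ (n, u) : PFName N V × PFVer V), negAtomName n vs,
            ({Sum.inr false} : Set (PFVer V))) ∈ ΔΨred ΔΨ := by
          apply hss; right; exact ⟨u, hu, rfl⟩
        obtain ⟨v1, hv1, hv1S⟩ := hclo q hq _ _ hd1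
        obtain ⟨v0, hv0, hv0S⟩ := hclo _ huS _ _ hd2
        simp only [Set.mem_singleton_iff] at hv1 hv0
        subst hv1; subst hv0
        have := huniq _ _ _ hv1S hv0S
        simp at this
    | and ψL ψR ihL ihR =>
      intro b q hq hss
      cases b with
      | true =>
        rw [show encE q true (.and ψL ψR) = encE q true ψL ∪ encE q true ψR from by
          simp [encE]] at hss
        have hL := ihL true q hq fun d hd => hss (Or.inl hd)
        have hR := ihR true q hq fun d hd => hss (Or.inr hd)
        simp only [if_true] at hL hR
        exact ⟨hL, hR⟩
      | false =>
        rw [show encE q false (.and ψL ψR) =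
            {(q, orName (.not ψL) (.not ψR),
              ({Sum.inr false, Sum.inr true} : Set (PFVer V)))} ∪
              encE (orName (.not ψL) (.not ψR), Sum.inr false) false ψL ∪
              encE (orName (.not ψL) (.not ψR), Sum.inr true) false ψR from by
          simp [encE]] at hss
        simp only [if_false, PSat]
        have hd : (q, orName (.not ψL) (.not ψR),
            ({Sum.inr false, Sum.inr true} : Set (PFVer V))) ∈ ΔΨred ΔΨ := by
          apply hss; left; left; rfl
        obtain ⟨v, hv, hvS⟩ := hclo q hq _ _ hd
        rcases hv with hv | hv
        · subst hv
          have := ihL false _ hvS fun d hd => hss (Or.inl (Or.inr hd))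
          simp only [if_false, Bool.false_eq_true] at this
          rintro ⟨h, _⟩; exact this h
        · simp only [Set.mem_singleton_iff] at hv; subst hv
          have := ihR false _ hvS fun d hd => hss (Or.inr hd)
          simp only [if_false, Bool.false_eq_true] at this
          rintro ⟨_, h⟩; exact this h
    | or ψL ψR ihL ihR =>
      intro b q hq hss
      cases b with
      | true =>
        rw [show encE q true (.or ψL ψR) =
            {(q, orName ψL ψR, ({Sum.inr false, Sum.inr true} : Set (PFVer V)))} ∪
              encE (orName ψL ψR, Sum.inr false) true ψL ∪
              encE (orName ψL ψR, Sum.inr true) true ψR from by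
          simp [encE]] at hss
        have hd : (q, orName ψL ψR,
            ({Sum.inr false, Sum.inr true} : Set (PFVer V))) ∈ ΔΨred ΔΨ := by
          apply hss; left; left; rfl
        obtain ⟨v, hv, hvS⟩ := hclo q hq _ _ hd
        rcases hv with hv | hv
        · subst hv
          have := ihL true _ hvS fun d hd => hss (Or.inl (Or.inr hd))
          simp only [if_true] at this
          exact Or.inl this
        · simp only [Set.mem_singleton_iff] at hv; subst hv
          have := ihR true _ hvS fun d hd => hss (Or.inr hd)
          simp only [if_true] at this
          exact Or.inr this
      | false =>
        rw [show encE q false (.or ψL ψR) = encE q false ψL ∪ encE q false ψR from by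
          simp [encE]] at hss
        have hL := ihL false q hq fun d hd => hss (Or.inl hd)
        have hR := ihR false q hq fun d hd => hss (Or.inr hd)
        simp only [if_false, Bool.false_eq_true] at hL hR
        simp only [if_false, PSat]
        rintro (h | h)
        · exact hL h
        · exact hR h
    | not ψ ih =>
      intro b q hq hss
      cases b with
      | true =>
        have := ih false q hq (by simpa [encE] using hss)
        simpa [PSat] using this
      | false =>
        have := ih true q hq (by simpa [encE] using hss)
        simp only [if_true] at this
        simp only [if_false, PSat, not_not]
        exact this
  refine ⟨?_, hroot, ?_, ?_⟩
  · intro p hp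
    have := hsub hp
    rcases this with ⟨p', hp', heq⟩ | ⟨x, b, heq⟩
    · have : p' = p := by
        have h1 := congrArg Prod.fst heq
        have h2 := congrArg Prod.snd heq
        simp [embΨ] at h1 h2
        exact Prod.ext h1 h2
      rwa [← this]
    · exfalso
      have := congrArg Prod.fst heq
      simp [embΨ] at this
  · intro p hp ψ hψ
    have hss : encE (embΨ p) true ψ ⊆ ΔΨred ΔΨ := fun d hd => ⟨p, ψ, hψ, hd⟩
    have := main ψ true (embΨ p) hp hss
    simpa using this
  · intro n v v' hv hv'
    have := huniq (Sum.inl n) (Sum.inl v) (Sum.inl v') hv hv'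
    simpa using this
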